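/- Let g : ℝ → ℝ be strictly convex and differentiable. Consider minimizing ∑_{j=1}^J g(w_j) subject to w_j ≥ 0 for all j, affine constraints of the form ∑_{j∈G_k} w_j a_k + terms depending only on the group index k, where G₁,…,G_K partitions [J]. Then at any minimizer, w_i = w_j whenever i and j belong to the same group. Specifically: if w is a minimizer of ∑_j g(w_j) subject to w ≥ 0 and Λ' Z' w = b and 1'w = 1 where Z is the membership matrix, then for i,j in the same group, w_i = w_j. -/

import Mathlib

open Matrix

/-- For a strictly convex differentiable `g`, any minimizer of `∑_j g(w_j)` subject to
`w ≥ 0`, the balancing constraints `Λᵀ Zᵀ w = b`, and `1ᵀw = 1` (where `Z` is the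
membership matrix of a partition of `[J]`) has within-group equal weights. -/
theorem minimizer_within_group_equal (J K r : ℕ) (G : Fin J → Fin K)
    (hsurj : Function.Surjective G)
    (Z : Matrix (Fin J) (Fin K) ℝ)
    (hZ : ∀ j k, Z j k = if G j = k then 1 else 0)
    (Λ : Matrix (Fin K) (Fin r) ℝ) (b : Fin r → ℝ)
    (g g' : ℝ → ℝ) (hg : StrictConvexOn ℝ Set.univ g)
    (hdiff : ∀ x : ℝ, HasDerivAt g (g' x) x)
    (w : Fin J → ℝ)
    (hfeas : (∀ j, 0 ≤ w j) ∧ Λᵀ.mulVec (Zᵀ.mulVec w) = b ∧ ∑ j, w j = 1)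
    (hmin : ∀ v : Fin J → ℝ,
      ((∀ j, 0 ≤ v j) ∧ Λᵀ.mulVec (Zᵀ.mulVec v) = b ∧ ∑ j, v j = 1) →
      ∑ j, g (w j) ≤ ∑ j, g (v j)) :
    ∀ i j, G i = G j → w i = w j := by
  intro i j hij
  by_contra hne
  have hij' : i ≠ j := by rintro rfl; exact hne rfl
  set m : ℝ := (w i + w j) / 2 with hm
  set v : Fin J → ℝ := fun t => if t = i ∨ t = j then m else w t with hv
  have hvi : v i = m := by simp [hv]
  have hvj : v j = m := by simp [hv]
  have hvt : ∀ t, t ≠ i → t ≠ j → v t = w t := by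
    intro t h1 h2; simp [hv, h1, h2]
  -- generic difference sum lemma
  have hdsum : ∀ (f : Fin J → ℝ), (∀ t, t ≠ i → t ≠ j → f t = 0) →
      ∑ t, f t = f i + f j := by
    intro f hf
    exact Finset.sum_eq_add_of_mem i j (Finset.mem_univ i) (Finset.mem_univ j) hij'
      (fun c _ hc => hf c hc.1 hc.2)
  -- nonnegativity
  have hm0 : 0 ≤ m := by
    have := hfeas.1 i; have := hfeas.1 j
    rw [hm]; linarith
  have hvpos : ∀ t, 0 ≤ v t := by
    intro t
    by_cases h : t = i ∨ t = j
    · simp [hv, h, hm0]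
    · push_neg at h
      rw [hvt t h.1 h.2]; exact hfeas.1 t
  -- sum constraint
  have hsum : ∑ t, v t = 1 := by
    have h1 : ∑ t, (v t - w t) = (v i - w i) + (v j - w j) := by
      apply hdsum
      intro t h1 h2; rw [hvt t h1 h2]; ring
    have h2 : ∑ t, (v t - w t) = ∑ t, v t - ∑ t, w t := Finset.sum_sub_distrib _ _
    rw [h2, hvi, hvj, hm] at h1
    have := hfeas.2.2
    linarith
  -- group sum constraint
  have hZv : Zᵀ.mulVec v = Zᵀ.mulVec w := by
    funext k
    simp only [mulVec, dotProduct, transpose_apply]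
    have h1 : ∑ t, (Z t k * v t - Z t k * w t)
        = (Z i k * v i - Z i k * w i) + (Z j k * v j - Z j k * w j) := by
      apply hdsum
      intro t h1 h2; rw [hvt t h1 h2]; ring
    have h2 : ∑ t, (Z t k * v t - Z t k * w t)
        = ∑ t, Z t k * v t - ∑ t, Z t k * w t := Finset.sum_sub_distrib _ _
    have hZik : Z i k = Z j k := by rw [hZ, hZ, hij]
    rw [h2, hvi, hvj, hZik, hm] at h1
    linarith
  have hfeasv : (∀ t, 0 ≤ v t) ∧ Λᵀ.mulVec (Zᵀ.mulVec v) = b ∧ ∑ t, v t = 1 :=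
    ⟨hvpos, by rw [hZv]; exact hfeas.2.1, hsum⟩
  -- strict convexity
  have hconv : g m + g m < g (w i) + g (w j) := by
    have := hg.2 (Set.mem_univ (w i)) (Set.mem_univ (w j)) hne
      (by norm_num : (0:ℝ) < 1/2) (by norm_num : (0:ℝ) < 1/2) (by norm_num)
    simp only [smul_eq_mul] at this
    have hmeq : (1/2 : ℝ) * w i + (1/2 : ℝ) * w j = m := by rw [hm]; ring
    rw [hmeq] at this
    linarith
  -- objective strictly decreases
  have hlt : ∑ t, g (v t) < ∑ t, g (w t) := by
    have h1 : ∑ t, (g (v t) - g (w t)) = (g (v i) - g (w i)) + (g (v j) - g (w j)) := by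
      apply hdsum
      intro t h1 h2; rw [hvt t h1 h2]; ring
    have h2 : ∑ t, (g (v t) - g (w t))
        = ∑ t, g (v t) - ∑ t, g (w t) := Finset.sum_sub_distrib _ _
    rw [h2, hvi, hvj] at h1
    linarith
  exact absurd (hmin v hfeasv) (not_le.mpr hlt)
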